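/- Exponential growth of the feature space with depth: with m ≥ 1, l ≥ 1, and q : ℕ → ℤ defined by q(0) = m and q(d) = l · (2^{∑_{t=0}^{d−1} q(t)} − 1) − ∑_{t=1}^{d−1} q(t) for d ≥ 1, one has q(d) ≥ 1 for every d ≥ 1, and q(d+1) ≥ 2^{q(d)} for every d ≥ 1. -/

import Mathlib

private lemma two_pow_ge (n : ℕ) : (n : ℤ) + 1 ≤ 2 ^ n := by
  exact_mod_cast Nat.lt_two_pow_self (n := n)

private lemma range_split (q : ℕ → ℤ) (d : ℕ) (hd : 1 ≤ d) :
    (∑ t ∈ Finset.range d, q t) = q 0 + ∑ t ∈ Finset.Icc 1 (d - 1), q t := by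
  have h : Finset.range d = insert 0 (Finset.Icc 1 (d - 1)) := by
    ext x
    simp only [Finset.mem_range, Finset.mem_insert, Finset.mem_Icc]
    omega
  rw [h, Finset.sum_insert (by simp)]

private lemma icc_split (q : ℕ → ℤ) (d : ℕ) (hd : 1 ≤ d) :
    (∑ t ∈ Finset.Icc 1 d, q t) = q d + ∑ t ∈ Finset.Icc 1 (d - 1), q t := by
  have h : Finset.Icc 1 d = insert d (Finset.Icc 1 (d - 1)) := by
    ext x
    simp only [Finset.mem_insert, Finset.mem_Icc]
    omega
  rw [h, Finset.sum_insert (by simp only [Finset.mem_Icc]; omega)]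

/-- **Exponential growth of the feature space with depth.**
With `m ≥ 1`, `l ≥ 1`, and `q : ℕ → ℤ` defined by `q 0 = m` and
`q d = l · (2 ^ (∑_{t=0}^{d−1} q t) − 1) − ∑_{t=1}^{d−1} q t` for `d ≥ 1`, one has
`q d ≥ 1` for every `d ≥ 1`, and `q (d+1) ≥ 2 ^ (q d)` for every `d ≥ 1`. -/
theorem feature_count_exponential_growth (m l : ℤ) (hm : 1 ≤ m) (hl : 1 ≤ l)
    (q : ℕ → ℤ) (hq0 : q 0 = m)
    (hqd : ∀ d : ℕ, 1 ≤ d →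
      q d = l * (2 ^ (∑ t ∈ Finset.range d, q t).toNat - 1)
              - ∑ t ∈ Finset.Icc 1 (d - 1), q t) :
    (∀ d : ℕ, 1 ≤ d → 1 ≤ q d) ∧
    (∀ d : ℕ, 1 ≤ d → (2 : ℤ) ^ (q d).toNat ≤ q (d + 1)) := by
  have main : ∀ d : ℕ, 1 ≤ d → 1 ≤ q d := by
    intro d
    induction d using Nat.strong_induction_on with
    | _ d ih =>
      intro hd
      set P : ℤ := ∑ t ∈ Finset.Icc 1 (d - 1), q t with hPdef
      have hP : 0 ≤ P := by
        apply Finset.sum_nonneg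
        intro t ht
        simp only [Finset.mem_Icc] at ht
        linarith [ih t (by omega) ht.1]
      have hS : (∑ t ∈ Finset.range d, q t) = m + P := by
        rw [range_split q d hd, hq0]
      set n : ℕ := (∑ t ∈ Finset.range d, q t).toNat with hndef
      have hn : (n : ℤ) = m + P := by
        rw [hndef, hS, Int.toNat_of_nonneg (by linarith)]
      set pn : ℕ := P.toNat with hpndef
      have hpn : (pn : ℤ) = P := Int.toNat_of_nonneg hP
      have hnpn : pn + 1 ≤ n := by
        have : (pn : ℤ) + 1 ≤ (n : ℤ) := by rw [hn, hpn]; linarith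
        exact_mod_cast this
      have hpow : (2 : ℤ) ^ (pn + 1) ≤ 2 ^ n :=
        pow_le_pow_right₀ (by norm_num) hnpn
      have hA := two_pow_ge pn
      have hX : P + 2 ≤ (2 : ℤ) ^ n := by
        have : (2 : ℤ) ^ (pn + 1) = 2 * 2 ^ pn := by ring
        nlinarith
      rw [hqd d hd, ← hndef, ← hPdef]
      nlinarith
  refine ⟨main, ?_⟩
  intro d hd
  have hqd1 : 1 ≤ q d := main d hd
  set P : ℤ := ∑ t ∈ Finset.Icc 1 (d - 1), q t with hPdef
  have hP : 0 ≤ P := by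
    apply Finset.sum_nonneg
    intro t ht
    simp only [Finset.mem_Icc] at ht
    linarith [main t ht.1]
  have hP1 : (∑ t ∈ Finset.Icc 1 (d + 1 - 1), q t) = q d + P := by
    have : d + 1 - 1 = d := rfl
    rw [this, icc_split q d hd]
  have hS1 : (∑ t ∈ Finset.range (d + 1), q t) = m + P + q d := by
    rw [range_split q (d + 1) (by omega), hq0, hP1]; ring
  set n : ℕ := (∑ t ∈ Finset.range (d + 1), q t).toNat with hndef
  have hn : (n : ℤ) = m + P + q d := by
    rw [hndef, hS1, Int.toNat_of_nonneg (by linarith)]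
  set pn : ℕ := P.toNat with hpndef
  have hpn : (pn : ℤ) = P := Int.toNat_of_nonneg hP
  set qn : ℕ := (q d).toNat with hqndef
  have hqn : (qn : ℤ) = q d := Int.toNat_of_nonneg (by linarith)
  have hnn : qn + pn + 1 ≤ n := by
    have : (qn : ℤ) + pn + 1 ≤ (n : ℤ) := by rw [hn, hpn, hqn]; linarith
    exact_mod_cast this
  have hpow : (2 : ℤ) ^ (qn + pn + 1) ≤ 2 ^ n :=
    pow_le_pow_right₀ (by norm_num) hnn
  have hA := two_pow_ge pn
  have hB := two_pow_ge qn
  have hsplit : (2 : ℤ) ^ (qn + pn + 1) = 2 ^ qn * 2 ^ pn * 2 := by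
    rw [pow_add, pow_add]; ring
  have hX : (2 : ℤ) ^ qn + P + q d + 1 ≤ 2 ^ n := by
    rw [hsplit] at hpow
    nlinarith
  rw [hqd (d + 1) (by omega), ← hndef, hP1]
  nlinarith
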